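/- Let a ∈ C_K with |a| > 1; set R = |a|^{−1/(p−1)}, μ = max(|p|, R), and S = μR³. Let m ≥ 1 be an integer and let x ∈ C_K with R < |x| ≤ R^{1−p^{−m}}. Then for every integer 0 ≤ i ≤ m: (i) |φ_a^i(x)| = R^{1−p^i} · |x|^{p^i} ≤ 1; and (ii) φ_a^i(D̄_S(x)) ⊆ D̄_{S'_i}(φ_a^i(x)), where S'_i = μ^i R^{−e_i} S with e_i = p^{1−m} + p^{2−m} + ⋯ + p^{i−m} (so e_0 = 0); moreover S'_i < μ^i R^{−2} S. -/

import Mathlib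

/-- The polynomial map `φ_a(z) = (1-a) z^(p+1) + a z^p`. -/
def phi {K : Type*} [Field K] (p : ℕ) (a : K) (z : K) : K :=
  (1 - a) * z ^ (p + 1) + a * z ^ p

open IsUltrametricDist Finset

section helpers
variable {K : Type*} [NontriviallyNormedField K] [IsUltrametricDist K]

lemma norm_pow_sub_pow_le (z w : K) (n : ℕ) {ρ : ℝ} (hz : ‖z‖ ≤ ρ) (hw : ‖w‖ ≤ ρ) :
    ‖z ^ n - w ^ n‖ ≤ ‖z - w‖ * ρ ^ (n - 1) := by
  have hρ : 0 ≤ ρ := le_trans (norm_nonneg z) hz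
  calc ‖z ^ n - w ^ n‖ = ‖∑ i ∈ range n, z ^ i * w ^ (n - 1 - i)‖ * ‖z - w‖ := by
        rw [← norm_mul, geom_sum₂_mul]
    _ ≤ ρ ^ (n - 1) * ‖z - w‖ := by
        refine mul_le_mul_of_nonneg_right ?_ (norm_nonneg _)
        refine norm_sum_le_of_forall_le_of_nonneg (by positivity) fun i hi => ?_
        rw [mem_range] at hi
        calc ‖z ^ i * w ^ (n - 1 - i)‖ = ‖z‖ ^ i * ‖w‖ ^ (n - 1 - i) := by
              rw [norm_mul, norm_pow, norm_pow]
          _ ≤ ρ ^ i * ρ ^ (n - 1 - i) := by gcongr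
          _ = ρ ^ (n - 1) := by rw [← pow_add]; congr 1; omega
    _ = ‖z - w‖ * ρ ^ (n - 1) := mul_comm _ _

lemma norm_pow_prime_sub_le {p : ℕ} (hp : p.Prime) (z w : K) {δ ρ : ℝ}
    (hzw : ‖z - w‖ ≤ δ) (hw : ‖w‖ ≤ ρ) (hδρ : δ ≤ ρ) :
    ‖z ^ p - w ^ p‖ ≤ max (δ ^ p) (‖(p : K)‖ * δ * ρ ^ (p - 1)) := by
  have hδ0 : 0 ≤ δ := le_trans (norm_nonneg _) hzw
  have hρ0 : 0 ≤ ρ := hδ0.trans hδρ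
  have hz : z ^ p - w ^ p
      = ∑ k ∈ range p, (z - w) ^ (k + 1) * w ^ (p - (k + 1)) * (p.choose (k + 1) : K) := by
    have h1 : z ^ p = ((z - w) + w) ^ p := by ring_nf
    rw [h1, add_pow, Finset.sum_range_succ']
    simp [Nat.choose_zero_right]
  rw [hz]
  refine norm_sum_le_of_forall_le_of_nonneg
    (le_trans (by positivity) (le_max_left (δ ^ p) _)) fun k hk => ?_
  rw [mem_range] at hk
  rcases eq_or_lt_of_le (Nat.succ_le_of_lt hk) with h | h
  · -- k + 1 = p
    subst h
    refine le_max_of_le_left ?_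
    simp only [Nat.succ_eq_add_one, Nat.sub_self, pow_zero, Nat.choose_self, Nat.cast_one,
      mul_one, norm_pow]
    exact pow_le_pow_left₀ (norm_nonneg _) hzw _
  · -- k + 1 < p
    refine le_max_of_le_right ?_
    obtain ⟨c, hc⟩ := hp.dvd_choose_self (Nat.succ_ne_zero k) h
    have hcnorm : ‖(p.choose (k + 1) : K)‖ ≤ ‖(p : K)‖ := by
      rw [hc]
      push_cast
      rw [norm_mul]
      exact mul_le_of_le_one_right (norm_nonneg _) (norm_natCast_le_one K c)
    calc ‖(z - w) ^ (k + 1) * w ^ (p - (k + 1)) * (p.choose (k + 1) : K)‖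
        = ‖z - w‖ ^ (k + 1) * ‖w‖ ^ (p - (k + 1)) * ‖(p.choose (k + 1) : K)‖ := by
          rw [norm_mul, norm_mul, norm_pow, norm_pow]
      _ ≤ (δ * ρ ^ k) * ρ ^ (p - (k + 1)) * ‖(p : K)‖ := by
          refine mul_le_mul (mul_le_mul ?_ (pow_le_pow_left₀ (norm_nonneg _) hw _) (by positivity)
            (by positivity)) hcnorm (norm_nonneg _) (by positivity)
          calc ‖z - w‖ ^ (k + 1) ≤ δ ^ (k + 1) := pow_le_pow_left₀ (norm_nonneg _) hzw _
            _ = δ * δ ^ k := by rw [pow_succ]; ring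
            _ ≤ δ * ρ ^ k := by gcongr
      _ = ‖(p : K)‖ * δ * (ρ ^ k * ρ ^ (p - (k + 1))) := by ring
      _ = ‖(p : K)‖ * δ * ρ ^ (p - 1) := by rw [← pow_add]; congr 2; omega

lemma norm_phi_sub_phi_le {p : ℕ} (hp : p.Prime) {a : K} (ha : 1 < ‖a‖) (z w : K) {δ ρ : ℝ}
    (hzw : ‖z - w‖ ≤ δ) (hz : ‖z‖ ≤ ρ) (hw : ‖w‖ ≤ ρ) (hδρ : δ ≤ ρ) :
    ‖phi p a z - phi p a w‖
      ≤ ‖a‖ * max (δ * ρ ^ p) (max (δ ^ p) (‖(p : K)‖ * δ * ρ ^ (p - 1))) := by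
  have hδ0 : 0 ≤ δ := le_trans (norm_nonneg _) hzw
  have hρ0 : 0 ≤ ρ := hδ0.trans hδρ
  have h1a : ‖1 - a‖ = ‖a‖ := by
    have h : ‖a + (-1 : K)‖ = max ‖a‖ ‖(-1 : K)‖ :=
      norm_add_eq_max_of_norm_ne_norm (by rw [norm_neg, norm_one]; exact (ne_of_gt ha))
    rw [show (1 : K) - a = -(a + (-1)) by ring, norm_neg, h, norm_neg, norm_one,
      max_eq_left ha.le]
  have hsplit : phi p a z - phi p a w
      = (1 - a) * (z ^ (p + 1) - w ^ (p + 1)) + a * (z ^ p - w ^ p) := by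
    simp only [phi]; ring
  rw [hsplit]
  refine le_trans (norm_add_le_max _ _) (max_le ?_ ?_)
  · calc ‖(1 - a) * (z ^ (p + 1) - w ^ (p + 1))‖ = ‖a‖ * ‖z ^ (p + 1) - w ^ (p + 1)‖ := by
          rw [norm_mul, h1a]
      _ ≤ ‖a‖ * (δ * ρ ^ p) := by
          refine mul_le_mul_of_nonneg_left ?_ (norm_nonneg a)
          refine le_trans (norm_pow_sub_pow_le z w (p + 1) hz hw) ?_
          simpa using mul_le_mul_of_nonneg_right hzw (by positivity : (0:ℝ) ≤ ρ ^ (p + 1 - 1))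
      _ ≤ _ := mul_le_mul_of_nonneg_left (le_max_left _ _) (norm_nonneg a)
  · calc ‖a * (z ^ p - w ^ p)‖ = ‖a‖ * ‖z ^ p - w ^ p‖ := norm_mul _ _
      _ ≤ _ := mul_le_mul_of_nonneg_left
          ((norm_pow_prime_sub_le hp z w hzw hw hδρ).trans (le_max_right _ _)) (norm_nonneg a)

lemma norm_phi_eq {p : ℕ} (hp : 0 < p) (a z : K) (ha : 1 < ‖a‖)
    (hz0 : 0 < ‖z‖) (hz1 : ‖z‖ < 1) : ‖phi p a z‖ = ‖a‖ * ‖z‖ ^ p := by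
  have h1a : ‖1 - a‖ = ‖a‖ := by
    have h : ‖a + (-1 : K)‖ = max ‖a‖ ‖(-1 : K)‖ :=
      norm_add_eq_max_of_norm_ne_norm (by rw [norm_neg, norm_one]; exact (ne_of_gt ha))
    rw [show (1 : K) - a = -(a + (-1)) by ring, norm_neg, h, norm_neg, norm_one,
      max_eq_left ha.le]
  have hlt : ‖(1 - a) * z ^ (p + 1)‖ < ‖a * z ^ p‖ := by
    rw [norm_mul, norm_mul, h1a, norm_pow, norm_pow, pow_succ]
    calc ‖a‖ * (‖z‖ ^ p * ‖z‖) < ‖a‖ * (‖z‖ ^ p * 1) := by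
          refine mul_lt_mul_of_pos_left (mul_lt_mul_of_pos_left hz1 (by positivity)) ?_
          linarith
      _ = ‖a‖ * ‖z‖ ^ p := by ring
  rw [phi, norm_add_eq_max_of_norm_ne_norm (ne_of_lt hlt), max_eq_right hlt.le, norm_mul,
    norm_pow]

end helpers

set_option maxHeartbeats 1600000 in
/-- Lemma on the behavior of iterates of `φ_a` just outside `D̄_R(0)`:
`|φ_a^i(x)| = R^{1-p^i}|x|^{p^i} ≤ 1` and `φ_a^i(D̄_S(x)) ⊆ D̄_{S'_i}(φ_a^i(x))`
with `S'_i = μ^i R^{-e_i} S < μ^i R^{-2} S`, where `e_i = p^{1-m} + ⋯ + p^{i-m}`. -/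
theorem phi_iterate_shrinking_disk
    {K : Type*} [NontriviallyNormedField K] [IsUltrametricDist K]
    [CompleteSpace K] [IsAlgClosed K]
    (p : ℕ) (hp : p.Prime) (hpK : ‖(p : K)‖ < 1)
    (a : K) (ha : 1 < ‖a‖) (R μ S : ℝ)
    (hR : R = ‖a‖ ^ (-(1 : ℝ) / ((p : ℝ) - 1)))
    (hμ : μ = max ‖(p : K)‖ R) (hS : S = μ * R ^ 3)
    (m : ℕ) (hm : 1 ≤ m) (x : K)
    (hx₁ : R < ‖x‖) (hx₂ : ‖x‖ ≤ R ^ ((1 : ℝ) - (p : ℝ) ^ (-(m : ℤ)))) :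
    ∀ i ≤ m,
      ‖(phi p a)^[i] x‖ = R ^ ((1 : ℝ) - (p : ℝ) ^ i) * ‖x‖ ^ ((p : ℝ) ^ i) ∧
      ‖(phi p a)^[i] x‖ ≤ 1 ∧
      (phi p a)^[i] '' Metric.closedBall x S ⊆
        Metric.closedBall ((phi p a)^[i] x)
          (μ ^ i * R ^ (-(∑ j ∈ Finset.range i, (p : ℝ) ^ ((j : ℤ) + 1 - (m : ℤ)))) * S) ∧
      μ ^ i * R ^ (-(∑ j ∈ Finset.range i, (p : ℝ) ^ ((j : ℤ) + 1 - (m : ℤ)))) * S <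
        μ ^ i * R ^ (-(2 : ℝ)) * S := by
  have hp2 : 2 ≤ p := hp.two_le
  have hpR : (1 : ℝ) < p := by exact_mod_cast hp.one_lt
  have hp0R : (0 : ℝ) < p := by positivity
  have hA0 : (0 : ℝ) < ‖a‖ := lt_trans one_pos ha
  have hR0 : 0 < R := hR ▸ Real.rpow_pos_of_pos hA0 _
  have hR1 : R < 1 := by
    rw [hR]
    exact Real.rpow_lt_one_of_one_lt_of_neg ha
      (div_neg_of_neg_of_pos (by norm_num) (by linarith))
  have hAR : ‖a‖ = R ^ ((1 : ℝ) - p) := by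
    have hq : (p : ℝ) - 1 ≠ 0 := by linarith
    rw [hR, ← Real.rpow_mul hA0.le,
      show (-(1 : ℝ) / ((p : ℝ) - 1)) * ((1 : ℝ) - p) = 1 by field_simp; ring,
      Real.rpow_one]
  have hμR : R ≤ μ := hμ ▸ le_max_right _ _
  have hμp : ‖(p : K)‖ ≤ μ := hμ ▸ le_max_left _ _
  have hμ0 : 0 < μ := lt_of_lt_of_le hR0 hμR
  have hμ1 : μ < 1 := by rw [hμ]; exact max_lt hpK hR1
  have hS0 : 0 < S := by rw [hS]; positivity
  set E : ℕ → ℝ := fun n => ∑ j ∈ Finset.range n, (p : ℝ) ^ ((j : ℤ) + 1 - (m : ℤ)) with hEdef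
  set S' : ℕ → ℝ := fun n => μ ^ n * R ^ (-(E n)) * S with hS'def
  -- E is bounded by 2
  have hE2 : ∀ i ≤ m, E i < 2 := by
    intro i hi
    have hmono : E i ≤ E m := by
      refine Finset.sum_le_sum_of_subset_of_nonneg (Finset.range_subset_range.mpr hi) ?_
      intro j _ _
      positivity
    refine lt_of_le_of_lt hmono ?_
    set r : ℝ := (p : ℝ)⁻¹ with hrdef
    have hr0 : 0 < r := by positivity
    have hr2 : r ≤ 1 / 2 := by
      rw [hrdef]
      rw [inv_le_iff_one_le_mul₀ hp0R]
      rw [div_mul_eq_mul_div, le_div_iff₀ (by norm_num)]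
      norm_num
      exact_mod_cast hp2
    have hEm : E m = ∑ j ∈ Finset.range m, r ^ j := by
      show (∑ j ∈ Finset.range m, (p : ℝ) ^ ((j : ℤ) + 1 - (m : ℤ))) = _
      rw [← Finset.sum_range_reflect (fun j => r ^ j) m]
      refine Finset.sum_congr rfl fun j hj => ?_
      rw [Finset.mem_range] at hj
      rw [hrdef, inv_pow, ← zpow_natCast (p : ℝ) (m - 1 - j), ← zpow_neg]
      congr 1
      omega
    rw [hEm, geom_sum_eq (by intro h; rw [h] at hr2; norm_num at hr2) m]
    have hrm : 0 < r ^ m := pow_pos hr0 m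
    rw [div_lt_iff_of_neg (by linarith : r - 1 < 0)]
    linarith
  have hS'pos : ∀ i, 0 < S' i := by
    intro i
    rw [hS'def]
    have := Real.rpow_pos_of_pos hR0 (-(E i))
    positivity
  -- part (iv): strict comparison
  have hlt : ∀ i ≤ m, S' i < μ ^ i * R ^ (-(2 : ℝ)) * S := by
    intro i hi
    have h2 : R ^ (-(E i)) < R ^ (-(2 : ℝ)) :=
      Real.rpow_lt_rpow_of_exponent_gt hR0 hR1 (by linarith [hE2 i hi])
    exact mul_lt_mul_of_pos_right (mul_lt_mul_of_pos_left h2 (pow_pos hμ0 i)) hS0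
  -- S' i ≤ R
  have hS'R : ∀ i ≤ m, S' i ≤ R := by
    intro i hi
    refine (hlt i hi).le.trans ?_
    have h3 : R ^ (-(2 : ℝ)) * R ^ (3 : ℕ) = R := by
      rw [← Real.rpow_natCast R 3, ← Real.rpow_add hR0]
      norm_num
    calc μ ^ i * R ^ (-(2 : ℝ)) * S = μ ^ (i + 1) * (R ^ (-(2 : ℝ)) * R ^ (3 : ℕ)) := by
          rw [hS, pow_succ]; ring
      _ = μ ^ (i + 1) * R := by rw [h3]
      _ ≤ 1 * R := by
          refine mul_le_mul_of_nonneg_right ?_ hR0.le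
          exact pow_le_one₀ hμ0.le hμ1.le
      _ = R := one_mul R
  -- the comparison engine for products μ^j * R^e
  have cmp : ∀ (j k : ℕ) (e f : ℝ), (k : ℝ) ≤ (j : ℝ) + (e - f) → f ≤ e →
      μ ^ j * R ^ e ≤ μ ^ k * R ^ f := by
    intro j k e f h1 h2
    rcases le_or_gt k j with h | h
    · exact mul_le_mul (pow_le_pow_of_le_one hμ0.le hμ1.le h)
        (Real.rpow_le_rpow_of_exponent_ge hR0 hR1.le h2)
        (Real.rpow_nonneg hR0.le _) (pow_nonneg hμ0.le _)
    · have hjk : j ≤ k := h.le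
      have hcast : ((k - j : ℕ) : ℝ) = (k : ℝ) - j := by
        push_cast [Nat.cast_sub hjk]; ring
      have hef : f ≤ e - ((k - j : ℕ) : ℝ) := by rw [hcast]; linarith
      calc μ ^ j * R ^ e
          = μ ^ j * (R ^ (e - ((k - j : ℕ) : ℝ)) * R ^ (((k - j : ℕ) : ℝ))) := by
            rw [← Real.rpow_add hR0]; ring_nf
        _ ≤ μ ^ j * (R ^ f * μ ^ (k - j)) := by
            refine mul_le_mul_of_nonneg_left ?_ (pow_nonneg hμ0.le _)
            refine mul_le_mul (Real.rpow_le_rpow_of_exponent_ge hR0 hR1.le hef) ?_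
              (Real.rpow_nonneg hR0.le _) (Real.rpow_nonneg hR0.le _)
            rw [Real.rpow_natCast]
            exact pow_le_pow_left₀ hR0.le hμR _
        _ = μ ^ k * R ^ f := by
            have hkk : j + (k - j) = k := by omega
            conv_rhs => rw [← hkk]
            rw [pow_add]; ring
  -- canonical forms
  have mulform : ∀ (j k : ℕ) (e f : ℝ), (μ ^ j * R ^ e) * (μ ^ k * R ^ f)
      = μ ^ (j + k) * R ^ (e + f) := by
    intro j k e f
    rw [pow_add, Real.rpow_add hR0]; ring
  have powform : ∀ (j : ℕ) (e : ℝ) (n : ℕ), (μ ^ j * R ^ e) ^ n = μ ^ (j * n) * R ^ (e * n) := by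
    intro j e n
    rw [mul_pow, pow_mul, ← Real.rpow_natCast (R ^ e) n, ← Real.rpow_mul hR0.le]
  have hSform : S = μ ^ 1 * R ^ ((3 : ℝ)) := by
    rw [hS, pow_one, ← Real.rpow_natCast R 3]; norm_num
  have hS'form : ∀ i, S' i = μ ^ (i + 1) * R ^ ((3 : ℝ) - E i) := by
    intro i
    rw [hS'def]
    show μ ^ i * R ^ (-(E i)) * S = _
    rw [hSform, mulform]
    congr 1
    ring
  -- main induction
  suffices H : ∀ i, i ≤ m →
      (‖(phi p a)^[i] x‖ = R ^ ((1 : ℝ) - (p : ℝ) ^ i) * ‖x‖ ^ ((p : ℝ) ^ i)) ∧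
      R < ‖(phi p a)^[i] x‖ ∧
      ‖(phi p a)^[i] x‖ ≤ R ^ ((1 : ℝ) - (p : ℝ) ^ ((i : ℤ) - (m : ℤ))) ∧
      ∀ z ∈ Metric.closedBall x S,
        (phi p a)^[i] z ∈ Metric.closedBall ((phi p a)^[i] x) (S' i) by
    intro i hi
    obtain ⟨h1, h2, h3, h4⟩ := H i hi
    refine ⟨h1, ?_, ?_, hlt i hi⟩
    · refine h3.trans (Real.rpow_le_one hR0.le hR1.le ?_)
      have : (p : ℝ) ^ ((i : ℤ) - (m : ℤ)) ≤ 1 :=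
        zpow_le_one_of_nonpos₀ hpR.le (by omega)
      linarith
    · rintro y ⟨z, hz, rfl⟩
      exact h4 z hz
  intro i
  induction i with
  | zero =>
    intro _
    refine ⟨?_, hx₁, ?_, ?_⟩
    · rw [Function.iterate_zero_apply, pow_zero, sub_self, Real.rpow_zero, Real.rpow_one,
        one_mul]
    · have h0 : ((0 : ℕ) : ℤ) - (m : ℤ) = -(m : ℤ) := by simp
      rw [Function.iterate_zero_apply, h0]
      exact hx₂
    · intro z hz
      simpa [hS'def, hEdef] using hz
  | succ i ih =>
    intro hi1
    have him : i < m := hi1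
    obtain ⟨h1, h2, h3, h4⟩ := ih him.le
    set w := (phi p a)^[i] x with hw
    set t : ℝ := (p : ℝ) ^ ((i : ℤ) - (m : ℤ)) with ht
    have ht0 : 0 < t := zpow_pos hp0R _
    have ht1 : t < 1 := by
      refine lt_of_le_of_lt (zpow_le_zpow_right₀ hpR.le (by omega : (i : ℤ) - m ≤ -1)) ?_
      rw [zpow_neg, zpow_one]
      exact inv_lt_one_of_one_lt₀ hpR
    have hρ0 : (0 : ℝ) < R ^ ((1 : ℝ) - t) := Real.rpow_pos_of_pos hR0 _
    have hρ1 : R ^ ((1 : ℝ) - t) < 1 := Real.rpow_lt_one hR0.le hR1 (by linarith)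
    have hw1 : ‖w‖ < 1 := lt_of_le_of_lt h3 hρ1
    have hw0 : 0 < ‖w‖ := hR0.trans h2
    have hnφ : ‖phi p a w‖ = ‖a‖ * ‖w‖ ^ p := norm_phi_eq hp.pos a w ha hw0 hw1
    have hit : (phi p a)^[i + 1] x = phi p a w := Function.iterate_succ_apply' _ _ _
    have htp : (p : ℝ) ^ (((i + 1 : ℕ) : ℤ) - (m : ℤ)) = t * p := by
      rw [show (((i + 1 : ℕ)) : ℤ) - (m : ℤ) = ((i : ℤ) - (m : ℤ)) + 1 by push_cast; ring,
        zpow_add_one₀ (ne_of_gt hp0R), ht]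
    have hEsucc : E (i + 1) = E i + t * p := by
      have h' : ((i : ℤ) + 1 - (m : ℤ)) = (((i + 1 : ℕ) : ℤ) - (m : ℤ)) := by push_cast; ring
      show (∑ j ∈ Finset.range (i + 1), (p : ℝ) ^ ((j : ℤ) + 1 - (m : ℤ))) = _
      rw [Finset.sum_range_succ, h', htp]
    have hEi2 : E i < 2 := hE2 i him.le
    have hEi0 : (0 : ℝ) ≤ E i := Finset.sum_nonneg fun j _ => by positivity
    refine ⟨?_, ?_, ?_, ?_⟩
    · rw [hit, hnφ, h1, hAR,
        ← Real.rpow_natCast (R ^ ((1 : ℝ) - (p : ℝ) ^ i) * ‖x‖ ^ ((p : ℝ) ^ i)) p,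
        Real.mul_rpow (Real.rpow_nonneg hR0.le _) (Real.rpow_nonneg (norm_nonneg x) _),
        ← Real.rpow_mul hR0.le, ← Real.rpow_mul (norm_nonneg x), ← mul_assoc,
        ← Real.rpow_add hR0, pow_succ]
      congr 1
      · congr 1
        ring
    · rw [hit, hnφ]
      calc R = ‖a‖ * R ^ (p : ℕ) := by
            rw [hAR, ← Real.rpow_natCast R p, ← Real.rpow_add hR0,
              show (1 : ℝ) - (p : ℝ) + (p : ℝ) = 1 by ring, Real.rpow_one]
        _ < ‖a‖ * ‖w‖ ^ p :=
            mul_lt_mul_of_pos_left (pow_lt_pow_left₀ h2 hR0.le hp.ne_zero) hA0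
    · rw [hit, hnφ, htp]
      calc ‖a‖ * ‖w‖ ^ p ≤ ‖a‖ * (R ^ ((1 : ℝ) - t)) ^ p :=
            mul_le_mul_of_nonneg_left (pow_le_pow_left₀ (norm_nonneg w) h3 p) hA0.le
        _ = R ^ ((1 : ℝ) - t * p) := by
            rw [hAR, ← Real.rpow_natCast (R ^ ((1 : ℝ) - t)) p, ← Real.rpow_mul hR0.le,
              ← Real.rpow_add hR0]
            congr 1
            ring
    · intro z hz
      have hz' := h4 z hz
      rw [Metric.mem_closedBall, dist_eq_norm] at hz' ⊢
      rw [hit, Function.iterate_succ_apply']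
      set z' := (phi p a)^[i] z with hz'def
      have hδρ : S' i ≤ R ^ ((1 : ℝ) - t) := by
        refine (hS'R i him.le).trans ?_
        calc R = R ^ (1 : ℝ) := (Real.rpow_one R).symm
          _ ≤ R ^ ((1 : ℝ) - t) :=
            Real.rpow_le_rpow_of_exponent_ge hR0 hR1.le (by linarith)
      have hz'ρ : ‖z'‖ ≤ R ^ ((1 : ℝ) - t) := by
        rw [show z' = (z' - w) + w by ring]
        exact (norm_add_le_max _ _).trans (max_le (hz'.trans hδρ) h3)
      refine (norm_phi_sub_phi_le hp ha z' w hz' hz'ρ h3 hδρ).trans ?_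
      have htarget : S' (i + 1) = μ ^ (i + 2) * R ^ ((3 : ℝ) - E i - t * p) := by
        rw [hS'form (i + 1), hEsucc]
        congr 1
        ring
      have hρp : (R ^ ((1 : ℝ) - t)) ^ p = R ^ (((1 : ℝ) - t) * p) := by
        rw [← Real.rpow_natCast (R ^ ((1 : ℝ) - t)) p, ← Real.rpow_mul hR0.le]
      have hρp1 : (R ^ ((1 : ℝ) - t)) ^ (p - 1) = R ^ (((1 : ℝ) - t) * ((p : ℝ) - 1)) := by
        rw [← Real.rpow_natCast (R ^ ((1 : ℝ) - t)) (p - 1), ← Real.rpow_mul hR0.le]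
        congr 1
        rw [Nat.cast_sub hp.pos, Nat.cast_one]
      rw [mul_max_of_nonneg _ _ (norm_nonneg a), mul_max_of_nonneg _ _ (norm_nonneg a)]
      refine max_le ?_ (max_le ?_ ?_)
      · -- term I
        calc ‖a‖ * (S' i * (R ^ ((1 : ℝ) - t)) ^ p)
            = μ ^ (i + 1) * R ^ (((1 : ℝ) - p) + ((3 : ℝ) - E i) + ((1 : ℝ) - t) * p) := by
              rw [hAR, hS'form i, hρp, Real.rpow_add hR0, Real.rpow_add hR0]
              ring
          _ ≤ μ ^ (i + 2) * R ^ ((3 : ℝ) - E i - t * p) := by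
              refine cmp _ _ _ _ ?_ ?_ <;> push_cast <;> nlinarith [mul_pos ht0 hp0R]
          _ = S' (i + 1) := htarget.symm
      · -- term II
        calc ‖a‖ * S' i ^ p
            = μ ^ ((i + 1) * p) * R ^ (((1 : ℝ) - p) + ((3 : ℝ) - E i) * p) := by
              rw [hAR, hS'form i, powform, Real.rpow_add hR0]
              ring
          _ ≤ μ ^ (i + 2) * R ^ ((3 : ℝ) - E i - t * p) := by
              have hp2R : (2 : ℝ) ≤ (p : ℝ) := by exact_mod_cast hp2
              have hi0 : (0 : ℝ) ≤ (i : ℝ) := Nat.cast_nonneg i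
              refine cmp _ _ _ _ ?_ ?_
              · push_cast
                have key : (1 : ℝ) * 1 ≤ ((p : ℝ) - 1) * ((i : ℝ) + 3 - E i) :=
                  mul_le_mul (by linarith) (by linarith) (by norm_num) (by linarith)
                nlinarith [mul_pos ht0 hp0R, key]
              · have key2 : (0 : ℝ) ≤ ((p : ℝ) - 1) * (2 - E i) :=
                  mul_nonneg (by linarith) (by linarith)
                nlinarith [mul_pos ht0 hp0R, key2]
          _ = S' (i + 1) := htarget.symm
      · -- term III
        calc ‖a‖ * (‖(p : K)‖ * S' i * (R ^ ((1 : ℝ) - t)) ^ (p - 1))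
            ≤ ‖a‖ * (μ * S' i * (R ^ ((1 : ℝ) - t)) ^ (p - 1)) := by
              have h1' : 0 < S' i := hS'pos i
              have h2' : (0 : ℝ) < (R ^ ((1 : ℝ) - t)) ^ (p - 1) := pow_pos hρ0 _
              refine mul_le_mul_of_nonneg_left ?_ (norm_nonneg a)
              refine mul_le_mul_of_nonneg_right (mul_le_mul_of_nonneg_right hμp h1'.le) h2'.le
          _ = μ ^ (i + 2) * R ^ (((1 : ℝ) - p) + ((3 : ℝ) - E i) + ((1 : ℝ) - t) * ((p : ℝ) - 1)) := by
              rw [hAR, hS'form i, hρp1, Real.rpow_add hR0, Real.rpow_add hR0, pow_succ]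
              ring
          _ ≤ μ ^ (i + 2) * R ^ ((3 : ℝ) - E i - t * p) := by
              refine cmp _ _ _ _ ?_ ?_ <;> push_cast <;> nlinarith [ht0, hp0R]
          _ = S' (i + 1) := htarget.symm
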